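/- Let X and X' be n×n symmetric matrices over ℂ and assume X is diagonalizable. Then there exists P ∈ GL(n,ℂ) with P⁻¹ X P = X' if and only if there exists Q ∈ O(n,ℂ) (i.e. QᵀQ = I_n) with Qᵀ X Q = X'. -/

import Mathlib

open Matrix

-- Lemma 0: every symmetric invertible complex matrix S can be written as Tᵀ * T.
private lemma lem0 {ι : Type} [Fintype ι] [DecidableEq ι] (S : Matrix ι ι ℂ)
    (hS : S.IsSymm) (hdet : S.det ≠ 0) : ∃ T : Matrix ι ι ℂ, Tᵀ * T = S := by
  classical
  set B : LinearMap.BilinForm ℂ (ι → ℂ) := Matrix.toBilin' S with hBdef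
  have hBapp : ∀ x y, B x y = x ⬝ᵥ S *ᵥ y := fun x y => Matrix.toBilin'_apply' S x y
  have hBsymm : B.IsSymm := by
    rw [LinearMap.BilinForm.isSymm_def]
    intro x y
    simp only [RingHom.id_apply, hBdef]
    rw [Matrix.toBilin'_apply, Matrix.toBilin'_apply, Finset.sum_comm]
    refine Finset.sum_congr rfl fun i _ => Finset.sum_congr rfl fun j _ => ?_
    rw [← hS.apply i j]
    ring
  have hnd : B.Nondegenerate :=
    Matrix.nondegenerate_toBilin'_iff.mpr (Matrix.nondegenerate_of_det_ne_zero hdet)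
  obtain ⟨v, hv⟩ := LinearMap.BilinForm.exists_orthogonal_basis (LinearMap.BilinForm.isSymm_iff.1 hBsymm)
  have hvv : ∀ i, B (v i) (v i) ≠ 0 := fun i =>
    LinearMap.BilinForm.iIsOrtho.not_isOrtho_basis_self_of_nondegenerate hv hnd i
  have hsq : ∀ i, ∃ c : ℂ, c ^ 2 = B (v i) (v i) := fun i =>
    IsAlgClosed.exists_pow_nat_eq _ (by norm_num)
  choose c hc using hsq
  have hcne : ∀ i, c i ≠ 0 := by
    intro i h
    exact hvv i (by rw [← hc i, h]; ring)
  set w := fun i => (c i)⁻¹ • v i with hwdef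
  let e : Fin (Module.finrank ℂ (ι → ℂ)) ≃ ι :=
    Fintype.equivOfCardEq (by simp [Module.finrank_pi])
  set W : Matrix ι ι ℂ := Matrix.of (fun i a => w (e.symm a) i) with hWdef
  have key : ∀ a b : ι, (Wᵀ * S * W) a b = B (w (e.symm a)) (w (e.symm b)) := by
    intro a b
    rw [hBapp]
    simp only [Matrix.mul_apply, Matrix.transpose_apply, dotProduct, Matrix.mulVec,
      hWdef, Matrix.of_apply, Finset.sum_mul, Finset.mul_sum]
    rw [Finset.sum_comm]
    exact Finset.sum_congr rfl fun i _ => Finset.sum_congr rfl fun j _ => by ring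
  have hw : ∀ a' b', B (w a') (w b') = if a' = b' then 1 else 0 := by
    intro a' b'
    have hsm : B (w a') (w b') = (c a')⁻¹ * ((c b')⁻¹ * B (v a') (v b')) := by
      simp only [hwdef, _root_.map_smul, LinearMap.smul_apply, smul_eq_mul]
      ring
    rw [hsm]
    by_cases h : a' = b'
    · subst h
      rw [if_pos rfl, ← hc a', pow_two]
      have h0 := hcne a'
      field_simp
    · rw [if_neg h, LinearMap.isOrthoᵢ_def.mp hv a' b' h]
      ring
  have h1 : Wᵀ * S * W = 1 := by
    ext a b
    rw [key a b, hw, Matrix.one_apply]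
    simp [Equiv.symm_apply_eq, eq_comm]
  have hWdet : IsUnit W.det := by
    have h2 : W.det * (S.det * W.det) = 1 := by
      have := congrArg Matrix.det h1
      rw [Matrix.det_mul, Matrix.det_mul, Matrix.det_transpose, Matrix.det_one] at this
      rw [← this]; ring
    exact IsUnit.of_mul_eq_one _ h2
  have h4 : (Wᵀ)⁻¹ = S * W := Matrix.inv_eq_right_inv (by rw [← Matrix.mul_assoc]; exact h1)
  refine ⟨W⁻¹, ?_⟩
  rw [Matrix.transpose_nonsing_inv, h4, Matrix.mul_assoc, Matrix.mul_nonsing_inv W hWdet,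
    Matrix.mul_one]

-- Lemma A: block version of lem0
private lemma lemA (N : ℕ) : ∀ (ι : Type) [Fintype ι] [DecidableEq ι], Fintype.card ι ≤ N →
    ∀ (d : ι → ℂ) (S : Matrix ι ι ℂ), S.IsSymm → S.det ≠ 0 →
    (∀ i j, d i ≠ d j → S i j = 0) →
    ∃ T : Matrix ι ι ℂ, Tᵀ * T = S ∧ ∀ i j, d i ≠ d j → T i j = 0 := by
  induction N with
  | zero =>
    intro ι _ _ hcard d S hS hdet hsupp
    have : IsEmpty ι := Fintype.card_eq_zero_iff.mp (Nat.le_zero.mp hcard)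
    exact ⟨1, Subsingleton.elim _ _, fun i j _ => (this.false i).elim⟩
  | succ N ih =>
    intro ι _ _ hcard d S hS hdet hsupp
    classical
    by_cases hempty : IsEmpty ι
    · exact ⟨1, Subsingleton.elim _ _, fun i j _ => (hempty.false i).elim⟩
    rw [not_isEmpty_iff] at hempty
    obtain ⟨i₀⟩ := hempty
    set p : ι → Prop := fun i => d i = d i₀ with hp
    let e : {i // p i} ⊕ {i // ¬ p i} ≃ ι := Equiv.sumCompl p
    set A : Matrix {i // p i} {i // p i} ℂ := S.submatrix (↑) (↑) with hA
    set Dm : Matrix {i // ¬ p i} {i // ¬ p i} ℂ := S.submatrix (↑) (↑) with hDm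
    have hblock : S.submatrix e e = Matrix.fromBlocks A 0 0 Dm := by
      ext i j
      cases i with
      | inl i =>
        cases j with
        | inl j => rfl
        | inr j =>
          simp only [Matrix.submatrix_apply, Matrix.fromBlocks_apply₁₂, Matrix.zero_apply,
            Equiv.sumCompl_apply_inl, Equiv.sumCompl_apply_inr, e]
          exact hsupp _ _ (by rw [i.2]; exact fun h => j.2 h.symm)
      | inr i =>
        cases j with
        | inl j =>
          simp only [Matrix.submatrix_apply, Matrix.fromBlocks_apply₂₁, Matrix.zero_apply,
            Equiv.sumCompl_apply_inl, Equiv.sumCompl_apply_inr, e]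
          exact hsupp _ _ (by rw [j.2]; exact fun h => i.2 h)
        | inr j => rfl
    have hdets : A.det * Dm.det = S.det := by
      rw [← Matrix.det_fromBlocks_zero₂₁ A 0 Dm, ← hblock, Matrix.det_submatrix_equiv_self]
    have hAdet : A.det ≠ 0 := fun h => hdet (by rw [← hdets, h, zero_mul])
    have hDdet : Dm.det ≠ 0 := fun h => hdet (by rw [← hdets, h, mul_zero])
    have hAsymm : A.IsSymm := hS.submatrix _
    have hDsymm : Dm.IsSymm := hS.submatrix _
    obtain ⟨TA, hTA⟩ := lem0 A hAsymm hAdet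
    have hcard' : Fintype.card {i // ¬ p i} ≤ N := by
      have h1 : Fintype.card {i // ¬ p i} = Fintype.card ι - Fintype.card {i // p i} :=
        Fintype.card_subtype_compl p
      have h3 : Fintype.card {i // p i} ≤ Fintype.card ι := Fintype.card_subtype_le p
      have h2 : 0 < Fintype.card {i // p i} := Fintype.card_pos_iff.mpr ⟨⟨i₀, rfl⟩⟩
      omega
    obtain ⟨TD, hTD1, hTD2⟩ := ih {i // ¬ p i} hcard' (fun i => d i) Dm hDsymm hDdet
      (fun i j hij => hsupp i j hij)
    refine ⟨(Matrix.fromBlocks TA 0 0 TD).submatrix e.symm e.symm, ?_, ?_⟩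
    · rw [Matrix.transpose_submatrix, Matrix.fromBlocks_transpose, Matrix.submatrix_mul_equiv,
        Matrix.fromBlocks_multiply]
      simp only [Matrix.transpose_zero, Matrix.mul_zero, Matrix.zero_mul, add_zero, zero_add,
        hTA, hTD1]
      rw [← hblock]
      ext i j
      simp
    · have hsupp' : ∀ x y, d (e x) ≠ d (e y) → (Matrix.fromBlocks TA 0 0 TD) x y = 0 := by
        rintro (x | x) (y | y) hxy
        · exact absurd (by simp only [Equiv.sumCompl_apply_inl, e]; exact x.2.trans y.2.symm) hxy
        · rfl
        · rfl
        · exact hTD2 x y (by simpa [e] using hxy)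
      intro i j hij
      have := hsupp' (e.symm i) (e.symm j)
        (by rwa [Equiv.apply_symm_apply, Equiv.apply_symm_apply])
      exact this

-- orthogonal diagonalization
private lemma orthdiag {n : ℕ} (X R : Matrix (Fin n) (Fin n) ℂ) (hX : X.IsSymm)
    (hR : IsUnit R.det) (hD : (R⁻¹ * X * R).IsDiag) :
    ∃ Q : Matrix (Fin n) (Fin n) ℂ, Qᵀ * Q = 1 ∧ Qᵀ * X * Q = R⁻¹ * X * R := by
  classical
  set D := R⁻¹ * X * R with hDdef
  set S := Rᵀ * R with hSdef
  have hSsymm : S.IsSymm := by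
    rw [Matrix.IsSymm, hSdef, Matrix.transpose_mul, Matrix.transpose_transpose]
  have hSdet : S.det ≠ 0 := by
    rw [hSdef, Matrix.det_mul, Matrix.det_transpose]
    exact (hR.mul hR).ne_zero
  have hXR : X * R = R * D := by
    rw [hDdef, ← Matrix.mul_assoc, ← Matrix.mul_assoc, Matrix.mul_nonsing_inv R hR,
      Matrix.one_mul]
  have hSD : S * D = D * S := by
    have h1 : Rᵀ * X * R = S * D := by
      rw [Matrix.mul_assoc, hXR, hSdef, Matrix.mul_assoc]
    have h2 : (Rᵀ * X * R).IsSymm := by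
      rw [Matrix.IsSymm, Matrix.transpose_mul, Matrix.transpose_mul, Matrix.transpose_transpose,
        hX.eq, Matrix.mul_assoc]
    have h3 : (S * D)ᵀ = S * D := by rw [← h1, h2.eq]
    rw [Matrix.transpose_mul, hSsymm.eq, hD.isSymm.eq] at h3
    exact h3.symm
  have hsupp : ∀ i j, D i i ≠ D j j → S i j = 0 := by
    intro i j hij
    have h1 : (S * D) i j = (D * S) i j := by rw [hSD]
    rw [Matrix.mul_apply, Matrix.mul_apply] at h1
    rw [Finset.sum_eq_single j (fun k _ hk => by rw [hD hk, mul_zero])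
      (fun h => absurd (Finset.mem_univ j) h)] at h1
    rw [Finset.sum_eq_single i (fun k _ hk => by rw [hD (Ne.symm hk), zero_mul])
      (fun h => absurd (Finset.mem_univ i) h)] at h1
    have h2 : S i j * (D j j - D i i) = 0 := by ring_nf; linear_combination h1
    rcases mul_eq_zero.mp h2 with h | h
    · exact h
    · exact absurd (sub_eq_zero.mp h).symm hij
  obtain ⟨T, hT1, hT2⟩ := lemA (Fintype.card (Fin n)) (Fin n) le_rfl (fun i => D i i) S
    hSsymm hSdet hsupp
  have hTdet : IsUnit T.det := by
    have : T.det * T.det = S.det := by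
      rw [← hT1, Matrix.det_mul, Matrix.det_transpose]
    exact isUnit_iff_ne_zero.mpr fun h => hSdet (by rw [← this, h, mul_zero])
  have hTD : T * D = D * T := by
    ext i j
    rw [Matrix.mul_apply, Matrix.mul_apply]
    rw [Finset.sum_eq_single j (fun k _ hk => by rw [hD hk, mul_zero])
      (fun h => absurd (Finset.mem_univ j) h)]
    rw [Finset.sum_eq_single i (fun k _ hk => by rw [hD (Ne.symm hk), zero_mul])
      (fun h => absurd (Finset.mem_univ i) h)]
    by_cases h : D i i = D j j
    · rw [h, mul_comm]
    · rw [hT2 i j h, mul_zero, zero_mul]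
  have hkey : (R * T⁻¹)ᵀ * (R * T⁻¹) = 1 := by
    calc (R * T⁻¹)ᵀ * (R * T⁻¹)
        = (Tᵀ)⁻¹ * (Rᵀ * R) * T⁻¹ := by
          rw [Matrix.transpose_mul, Matrix.transpose_nonsing_inv]
          simp only [Matrix.mul_assoc]
      _ = (Tᵀ)⁻¹ * (Tᵀ * T) * T⁻¹ := by rw [← hSdef, ← hT1]
      _ = ((Tᵀ)⁻¹ * Tᵀ) * (T * T⁻¹) := by simp only [Matrix.mul_assoc]
      _ = 1 := by
          rw [Matrix.nonsing_inv_mul (Tᵀ) (by rwa [Matrix.det_transpose]),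
            Matrix.mul_nonsing_inv T hTdet, Matrix.mul_one]
  refine ⟨R * T⁻¹, hkey, ?_⟩
  · have hQt : (R * T⁻¹)ᵀ = T * R⁻¹ := by
      have h1 : (T * R⁻¹) * (R * T⁻¹) = 1 := by
        rw [Matrix.mul_assoc, ← Matrix.mul_assoc R⁻¹, Matrix.nonsing_inv_mul R hR,
          Matrix.one_mul, Matrix.mul_nonsing_inv T hTdet]
      calc (R * T⁻¹)ᵀ = (R * T⁻¹)ᵀ * ((R * T⁻¹) * (T * R⁻¹)) := by
            rw [mul_eq_one_comm.mp h1, Matrix.mul_one]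
        _ = ((R * T⁻¹)ᵀ * (R * T⁻¹)) * (T * R⁻¹) := by
            simp only [Matrix.mul_assoc]
        _ = T * R⁻¹ := by rw [hkey, Matrix.one_mul]
    rw [hQt]
    calc T * R⁻¹ * X * (R * T⁻¹) = T * (R⁻¹ * X * R) * T⁻¹ := by
          simp only [Matrix.mul_assoc]
      _ = T * D * T⁻¹ := by rw [← hDdef]
      _ = D * (T * T⁻¹) := by rw [hTD, Matrix.mul_assoc]
      _ = D := by rw [Matrix.mul_nonsing_inv T hTdet, Matrix.mul_one]

theorem symm_similar_iff_orthogonally_congruent (n : ℕ)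
    (X X' : Matrix (Fin n) (Fin n) ℂ) (hX : X.IsSymm) (hX' : X'.IsSymm)
    (hdiag : ∃ R : Matrix (Fin n) (Fin n) ℂ, IsUnit R.det ∧ (R⁻¹ * X * R).IsDiag) :
    (∃ P : Matrix (Fin n) (Fin n) ℂ, IsUnit P.det ∧ P⁻¹ * X * P = X') ↔
    (∃ Q : Matrix (Fin n) (Fin n) ℂ, Qᵀ * Q = 1 ∧ Qᵀ * X * Q = X') := by
  constructor
  · rintro ⟨P, hP, hPX⟩
    obtain ⟨R, hR, hD⟩ := hdiag
    obtain ⟨Q₁, hQ₁1, hQ₁2⟩ := orthdiag X R hX hR hD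
    have hR' : IsUnit (P⁻¹ * R).det := by
      rw [Matrix.det_mul]
      exact (Matrix.isUnit_nonsing_inv_det P hP).mul hR
    have hconj : (P⁻¹ * R)⁻¹ * X' * (P⁻¹ * R) = R⁻¹ * X * R := by
      rw [Matrix.mul_inv_rev, Matrix.nonsing_inv_nonsing_inv P hP, ← hPX]
      calc R⁻¹ * P * (P⁻¹ * X * P) * (P⁻¹ * R)
          = R⁻¹ * ((P * P⁻¹) * (X * ((P * P⁻¹) * R))) := by simp only [Matrix.mul_assoc]
        _ = R⁻¹ * X * R := by
            rw [Matrix.mul_nonsing_inv P hP]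
            simp only [Matrix.one_mul, Matrix.mul_assoc]
    obtain ⟨Q₂, hQ₂1, hQ₂2⟩ := orthdiag X' (P⁻¹ * R) hX' hR' (by rw [hconj]; exact hD)
    rw [hconj] at hQ₂2
    have hQ₂r : Q₂ * Q₂ᵀ = 1 := mul_eq_one_comm.mp hQ₂1
    refine ⟨Q₁ * Q₂ᵀ, ?_, ?_⟩
    · rw [Matrix.transpose_mul, Matrix.transpose_transpose, Matrix.mul_assoc,
        ← Matrix.mul_assoc Q₁ᵀ, hQ₁1, Matrix.one_mul, hQ₂r]
    · have : X' = Q₂ * (R⁻¹ * X * R) * Q₂ᵀ := by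
        rw [← hQ₂2]
        calc X' = 1 * X' * 1 := by rw [Matrix.one_mul, Matrix.mul_one]
          _ = Q₂ * Q₂ᵀ * X' * (Q₂ * Q₂ᵀ) := by rw [hQ₂r]
          _ = Q₂ * (Q₂ᵀ * X' * Q₂) * Q₂ᵀ := by simp only [Matrix.mul_assoc]
      rw [this, ← hQ₁2]
      rw [Matrix.transpose_mul, Matrix.transpose_transpose]
      simp only [Matrix.mul_assoc]
  · rintro ⟨Q, hQ1, hQ2⟩
    have hQdet : IsUnit Q.det := by
      have : Q.det * Q.det = 1 := by
        have := congrArg Matrix.det hQ1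
        rwa [Matrix.det_mul, Matrix.det_transpose, Matrix.det_one] at this
      exact IsUnit.of_mul_eq_one _ this
    refine ⟨Q, hQdet, ?_⟩
    rw [Matrix.inv_eq_left_inv hQ1]
    exact hQ2
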